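/- For x > 0 and n a natural number, Y_n^0(-x) = \sqrt{2/(\pi x)} e^{-1/x} \left( (-1)^n K_{n+1/2}(1/x) + \pi I_{n+1/2}(1/x) \right), where I and K are the modified Bessel functions. -/

import Mathlib

open Finset

/-- Generalized Bessel polynomial `Y_n^μ(z)`. -/
noncomputable def genBessel (n : ℕ) (μ z : ℂ) : ℂ :=
  ∑ k ∈ Finset.range (n + 1),
    (n.choose k : ℂ) * (ascPochhammer ℂ k).eval ((n : ℂ) + μ + 1) * (z / 2) ^ k

/-- Modified Bessel function of the second kind of half-integer order (real argument):
`K_{n+1/2}(x) = √(π/(2x)) e^{-x} ∑_{k=0}^n (n+k)!/(k!(n-k)!) (2x)^{-k}`. -/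
noncomputable def besselKhalf (n : ℕ) (x : ℝ) : ℝ :=
  Real.sqrt (Real.pi / (2 * x)) * Real.exp (-x) *
    ∑ k ∈ Finset.range (n + 1),
      ((n + k).factorial : ℝ) / ((k.factorial : ℝ) * ((n - k).factorial : ℝ)) / (2 * x) ^ k

/-- Modified Bessel function of the first kind of order `n+1/2` (real argument `x > 0`),
defined by its power series `I_ν(x) = ∑_{m≥0} (x/2)^{2m+ν} / (m! Γ(m+ν+1))`. -/
noncomputable def besselIhalf (n : ℕ) (x : ℝ) : ℝ :=
  ∑' m : ℕ, (x / 2) ^ ((2 * m : ℝ) + (n + 1 / 2)) /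
    ((m.factorial : ℝ) * Real.Gamma ((m : ℝ) + (n + 1 / 2) + 1))

namespace BesselAux

open Real

noncomputable def q (n i : ℕ) : ℝ :=
  ((2*n - i).factorial : ℝ) / (((n - i).factorial : ℝ) * (i.factorial : ℝ))

noncomputable def Qp (n : ℕ) (t : ℝ) : ℝ := ∑ i ∈ range (n+1), q n i * (2*t)^i

noncomputable def g (n m : ℕ) : ℝ :=
  ((m+n+1).factorial : ℝ) / ((m.factorial : ℝ) * ((2*m+2*n+2).factorial : ℝ))

lemma factR (a : ℕ) : ((a+1).factorial : ℝ) = (a+1) * (a.factorial : ℝ) := by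
  rw [Nat.factorial_succ]; push_cast; ring

lemma fact_ne (a : ℕ) : ((a.factorial : ℝ)) ≠ 0 := by
  exact_mod_cast a.factorial_ne_zero

lemma gid (n m : ℕ) :
    g n (m+1) - 2*(2*(n:ℝ)+3) * g (n+1) (m+1) = 4 * g (n+2) m := by
  unfold g
  rw [show m+1+n+1 = (m+n+1)+1 from by omega,
      show 2*(m+1)+2*n+2 = (2*m+2*n+2)+1+1 from by omega,
      show m+1+(n+1)+1 = (m+n+1)+1+1 from by omega,
      show 2*(m+1)+2*(n+1)+2 = (2*m+2*n+2)+1+1+1+1 from by omega,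
      show m+(n+2)+1 = (m+n+1)+1+1 from by omega,
      show 2*m+2*(n+2)+2 = (2*m+2*n+2)+1+1+1+1 from by omega]
  simp only [factR]
  push_cast
  field_simp
  ring

lemma q_self (n : ℕ) : q n n = 1 := by
  unfold q
  rw [show 2*n - n = n from by omega, Nat.sub_self]
  rw [Nat.factorial_zero]; field_simp
  simp

lemma qid0 (n : ℕ) : q (n+2) 0 = 2*(2*(n:ℝ)+3) * q (n+1) 0 := by
  unfold q
  rw [show 2*(n+2) - 0 = (2*n+2)+1+1 from by omega,
      show (n+2) - 0 = (n+1)+1 from by omega,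
      show 2*(n+1) - 0 = 2*n+2 from by omega,
      show (n+1) - 0 = n+1 from by omega]
  simp only [factR]
  push_cast
  field_simp
  ring

lemma qid1 (n : ℕ) : q (n+2) 1 = 2*(2*(n:ℝ)+3) * q (n+1) 1 := by
  unfold q
  rw [show 2*(n+2) - 1 = (2*n+1)+1+1 from by omega,
      show (n+2) - 1 = n+1 from by omega,
      show 2*(n+1) - 1 = 2*n+1 from by omega,
      show (n+1) - 1 = n from by omega]
  simp only [factR]
  push_cast
  field_simp
  ring

lemma qid2 (n i : ℕ) (hi : i < n) :
    q (n+2) (i+2) = q n i + 2*(2*(n:ℝ)+3) * q (n+1) (i+2) := by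
  obtain ⟨d, rfl⟩ : ∃ d, n = i + d + 1 := ⟨n - i - 1, by omega⟩
  unfold q
  rw [show 2*(i+d+1+2) - (i+2) = (i+2*d+2)+1+1 from by omega,
      show (i+d+1+2) - (i+2) = d+1 from by omega,
      show 2*(i+d+1) - i = i+2*d+2 from by omega,
      show (i+d+1) - i = d+1 from by omega,
      show 2*(i+d+1+1) - (i+2) = i+2*d+2 from by omega,
      show (i+d+1+1) - (i+2) = d from by omega]
  simp only [factR, show ∀ a : ℕ, (a+2).factorial = ((a+1)+1).factorial from fun a => rfl]
  push_cast
  field_simp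
  ring

lemma Qrec (n : ℕ) (t : ℝ) :
    Qp (n+2) t = 4*t^2 * Qp n t + 2*(2*(n:ℝ)+3) * Qp (n+1) t := by
  have hsplit : ∀ (N : ℕ) (f : ℕ → ℝ),
      ∑ i ∈ range (N+2), f i = (∑ i ∈ range N, f (i+2)) + f 1 + f 0 := by
    intro N f
    rw [Finset.sum_range_succ' f (N+1), Finset.sum_range_succ' (fun i => f (i+1)) N]
  unfold Qp
  rw [hsplit (n+1) (fun i => q (n+2) i * (2*t)^i),
      hsplit n (fun i => q (n+1) i * (2*t)^i)]
  rw [Finset.sum_range_succ (fun i => q (n+2) (i+2) * (2*t)^(i+2)) n]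
  rw [Finset.mul_sum (range (n+1)) (fun i => q n i * (2*t)^i) (4*t^2)]
  rw [Finset.sum_range_succ (fun i => 4*t^2 * (q n i * (2*t)^i)) n]
  have hcong : ∑ i ∈ range n, q (n+2) (i+2) * (2*t)^(i+2)
      = ∑ i ∈ range n, (4*t^2 * (q n i * (2*t)^i)
          + 2*(2*(n:ℝ)+3) * (q (n+1) (i+2) * (2*t)^(i+2))) := by
    refine Finset.sum_congr rfl fun i hi => ?_
    rw [qid2 n i (Finset.mem_range.mp hi)]
    ring
  rw [hcong, q_self, q_self, qid0, qid1]
  rw [Finset.sum_add_distrib]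
  simp only [mul_add, Finset.mul_sum]
  ring

noncomputable def Rf (n : ℕ) (y : ℝ) : ℝ :=
  (-1)^n * (Real.exp y * Qp n (-y) - Real.exp (-y) * Qp n y)

lemma Rrec (n : ℕ) (y : ℝ) :
    Rf (n+2) y = 4*y^2 * Rf n y - 2*(2*(n:ℝ)+3) * Rf (n+1) y := by
  unfold Rf
  rw [Qrec n y, Qrec n (-y), pow_succ, pow_succ, pow_succ]
  ring

lemma g0id (n : ℕ) : g n 0 = 2*(2*(n:ℝ)+3) * g (n+1) 0 := by
  unfold g
  rw [show (0:ℕ)+n+1 = n+1 from by omega,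
      show 2*0+2*n+2 = 2*n+2 from by omega,
      show (0:ℕ)+(n+1)+1 = (n+1)+1 from by omega,
      show 2*0+2*(n+1)+2 = (2*n+2)+1+1 from by omega]
  simp only [factR]
  push_cast
  field_simp
  ring

lemma key (n : ℕ) (y : ℝ) :
    HasSum (fun m : ℕ => (2:ℝ)^(2*n+2) * g n m * y^(2*n+1+2*m)) (Rf n y) := by
  induction n using Nat.twoStepInduction with
  | zero =>
    have h := (Real.hasSum_sinh y).mul_left 2
    have hsum : Rf 0 y = 2 * Real.sinh y := by
      unfold Rf Qp
      simp [q]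
      rw [Real.sinh_eq]
      ring
    rw [hsum]
    have heq : (fun m : ℕ => (2:ℝ)^(2*0+2) * g 0 m * y^(2*0+1+2*m))
        = fun m : ℕ => 2 * (y^(2*m+1) / (((2*m+1).factorial : ℝ))) := by
      funext m
      unfold g
      rw [show m+0+1 = m+1 from by omega, show 2*m+2*0+2 = (2*m+1)+1 from by omega]
      simp only [factR]
      push_cast
      rw [show 2*0+1+2*m = 2*m+1 from by omega]
      field_simp
      ring
    rw [heq]; exact h
  | one =>
    have hw := ((Real.hasSum_cosh y).mul_left (4*y)).sub ((Real.hasSum_sinh y).mul_left 4)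
    set w : ℕ → ℝ := fun m =>
      4*y * (y^(2*m) / (((2*m).factorial : ℝ))) - 4 * (y^(2*m+1) / (((2*m+1).factorial : ℝ)))
      with hwdef
    have hw0 : w 0 = 0 := by simp [hwdef]
    have hS : Rf 1 y = 4*y * Real.cosh y - 4 * Real.sinh y := by
      unfold Rf Qp
      have hq0 : q 1 0 = 2 := by unfold q; norm_num [Nat.factorial]
      have hq1 : q 1 1 = 1 := q_self 1
      simp only [Finset.sum_range_succ, Finset.sum_range_zero, hq0, hq1]
      rw [Real.cosh_eq, Real.sinh_eq]
      ring
    rw [hS]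
    have hshift : HasSum (fun m => w (m+1)) (4*y * Real.cosh y - 4 * Real.sinh y) := by
      rw [hasSum_nat_add_iff (f := w) 1]
      simpa [hw0] using hw
    have heq : (fun m : ℕ => (2:ℝ)^(2*1+2) * g 1 m * y^(2*1+1+2*m))
        = fun m => w (m+1) := by
      funext m
      simp only [hwdef]
      have f1 : (((2*(m+1)).factorial : ℕ) : ℝ) = (2*m+2) * (((2*m+1).factorial : ℕ) : ℝ) := by
        rw [show 2*(m+1) = (2*m+1)+1 from by omega, factR]; push_cast; ring
      have f2 : (((2*(m+1)+1).factorial : ℕ) : ℝ)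
          = (2*m+3) * ((2*m+2) * (((2*m+1).factorial : ℕ) : ℝ)) := by
        rw [show 2*(m+1)+1 = ((2*m+1)+1)+1 from by omega, factR, factR]; push_cast; ring
      have f3 : (((m+1+1).factorial : ℕ) : ℝ) = (m+2) * ((m+1) * ((m.factorial : ℕ) : ℝ)) := by
        rw [show m+1+1 = (m+1)+1 from rfl, factR, factR]; push_cast; ring
      have f4 : (((2*m+2*1+2).factorial : ℕ) : ℝ)
          = (2*m+4) * ((2*m+3) * ((2*m+2) * (((2*m+1).factorial : ℕ) : ℝ))) := by
        rw [show 2*m+2*1+2 = (((2*m+1)+1)+1)+1 from by omega, factR, factR, factR]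
        push_cast; ring
      unfold g
      rw [f1, f2, f3, f4]
      rw [show 2*(m+1)+1 = 2*m+3 from by omega, show 2*(m+1) = 2*m+2 from by omega,
          show 2*1+1+2*m = 2*m+3 from by omega]
      field_simp
      ring
    rw [heq]; exact hshift
  | more n ih1 ih2 =>
    have hw := (ih1.mul_left (4*y^2)).sub (ih2.mul_left (2*(2*(n:ℝ)+3)))
    set w : ℕ → ℝ := fun m =>
      4*y^2 * ((2:ℝ)^(2*n+2) * g n m * y^(2*n+1+2*m))
        - 2*(2*(n:ℝ)+3) * ((2:ℝ)^(2*(n+1)+2) * g (n+1) m * y^(2*(n+1)+1+2*m)) with hwdef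
    have hw0 : w 0 = 0 := by
      simp only [hwdef]
      rw [g0id n]
      rw [show 2*(n+1)+2 = (2*n+2)+2 from by omega,
          show 2*(n+1)+1+2*0 = (2*n+1+2*0)+2 from by omega]
      rw [pow_add, pow_add]
      ring
    have hshift : HasSum (fun m => w (m+1))
        (4*y^2 * Rf n y - 2*(2*(n:ℝ)+3) * Rf (n+1) y) := by
      rw [hasSum_nat_add_iff (f := w) 1]
      simpa [hw0] using hw
    have heq : (fun m : ℕ => (2:ℝ)^(2*(n+2)+2) * g (n+2) m * y^(2*(n+2)+1+2*m))
        = fun m => w (m+1) := by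
      funext m
      simp only [hwdef]
      have h := gid n m
      rw [show 2*(n+2)+2 = (2*n+2)+4 from by omega,
          show 2*(n+1)+2 = (2*n+2)+2 from by omega,
          show 2*(n+2)+1+2*m = (2*n+1+2*(m+1))+2 from by omega,
          show 2*(n+1)+1+2*(m+1) = (2*n+1+2*(m+1))+2 from by omega]
      rw [pow_add, pow_add, pow_add]
      linear_combination (-(4:ℝ) * (2:ℝ)^(2*n+2) * y^(2*n+1+2*(m+1)) * y^2) * h
    rw [heq, Rrec]
    exact hshift

lemma gamma_half (m : ℕ) :
    Real.Gamma ((m:ℝ) + 1/2) = Real.sqrt π * ((2*m).factorial : ℝ) / (4^m * (m.factorial : ℝ)) := by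
  induction m with
  | zero => simpa using Real.Gamma_one_half_eq
  | succ m ih =>
    have hne : ((m:ℝ) + 1/2) ≠ 0 := by positivity
    have h : ((m+1 : ℕ):ℝ) + 1/2 = ((m:ℝ) + 1/2) + 1 := by push_cast; ring
    rw [h, Real.Gamma_add_one hne, ih]
    rw [show 2*(m+1) = (2*m+1)+1 from by omega, factR, factR,
        show (2*m+1:ℕ) = (2*m)+1 from rfl, factR]
    push_cast
    field_simp
    ring

lemma hI (n : ℕ) (y : ℝ) (hy : 0 < y) :
    besselIhalf n y = (Real.sqrt (y/2) / (Real.sqrt π * 2^n * y^(n+1))) * Rf n y := by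
  have h := (key n y).mul_left (Real.sqrt (y/2) / (Real.sqrt π * 2^n * y^(n+1)))
  rw [besselIhalf, ← h.tsum_eq]
  apply tsum_congr
  intro m
  have hy2 : (0:ℝ) < y/2 := by positivity
  have e1 : ((2 * m : ℝ) + ((n:ℝ) + 1/2)) = ((2*m+n : ℕ):ℝ) + (1/2 : ℝ) := by push_cast; ring
  rw [e1, Real.rpow_add hy2, Real.rpow_natCast, ← Real.sqrt_eq_rpow]
  have e3 : Real.Gamma ((m:ℝ) + ((n:ℝ)+1/2) + 1)
      = Real.sqrt π * (((2*(m+n+1)).factorial : ℕ) : ℝ)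
          / (4^(m+n+1) * (((m+n+1).factorial : ℕ):ℝ)) := by
    have e : ((m:ℝ) + ((n:ℝ)+1/2) + 1) = (((m+n+1 : ℕ)):ℝ) + 1/2 := by push_cast; ring
    rw [e, gamma_half]
  rw [e3]
  unfold g
  rw [show 2*(m+n+1) = 2*m+2*n+2 from by omega]
  have hsπ : Real.sqrt π ≠ 0 := by positivity
  have hsy : Real.sqrt (y/2) ≠ 0 := by positivity
  have hyne : y ≠ 0 := ne_of_gt hy
  have h4 : (4:ℝ)^(m+n+1) = 2^(2*m+2*n+2) := by
    rw [show (4:ℝ) = 2^2 from by norm_num, ← pow_mul]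
    congr 1
    omega
  have hdiv : (y/2)^(2*m+n) = y^(2*m+n) / 2^(2*m+n) := div_pow y 2 _
  rw [h4, hdiv]
  field_simp
  ring

lemma sum_a_eq (n : ℕ) (t : ℝ) (ht : t ≠ 0) :
    ∑ k ∈ range (n+1),
        ((n+k).factorial : ℝ) / ((k.factorial : ℝ) * ((n-k).factorial : ℝ)) / (2*t)^k
      = Qp n t / (2*t)^n := by
  have h2t : (2*t) ≠ 0 := by simp [ht]
  rw [eq_div_iff (pow_ne_zero n h2t), Finset.sum_mul]
  unfold Qp
  rw [← Finset.sum_range_reflect (fun i => q n i * (2*t)^i) (n+1)]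
  apply Finset.sum_congr rfl
  intro k hk
  have hk' : k ≤ n := Nat.lt_succ_iff.mp (Finset.mem_range.mp hk)
  rw [show n+1-1-k = n-k from by omega]
  unfold q
  rw [show 2*n - (n-k) = n+k from by omega, show n - (n-k) = k from by omega]
  rw [pow_sub₀ (2*t) h2t hk']
  field_simp

lemma sum_aneg_eq (n : ℕ) (t : ℝ) (ht : t ≠ 0) :
    ∑ k ∈ range (n+1),
        (-1:ℝ)^k * (((n+k).factorial : ℝ) / ((k.factorial : ℝ) * ((n-k).factorial : ℝ)))
          / (2*t)^k
      = (-1:ℝ)^n * Qp n (-t) / (2*t)^n := by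
  have h2t : (2*t) ≠ 0 := by simp [ht]
  rw [eq_div_iff (pow_ne_zero n h2t)]
  rw [show (-1:ℝ)^n * Qp n (-t) = ∑ i ∈ range (n+1), (-1:ℝ)^n * (q n i * (2*(-t))^i) from by
    rw [Qp, Finset.mul_sum]]
  rw [← Finset.sum_range_reflect (fun i => (-1:ℝ)^n * (q n i * (2*(-t))^i)) (n+1),
      Finset.sum_mul]
  apply Finset.sum_congr rfl
  intro k hk
  have hk' : k ≤ n := Nat.lt_succ_iff.mp (Finset.mem_range.mp hk)
  rw [show n+1-1-k = n-k from by omega]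
  unfold q
  rw [show 2*n - (n-k) = n+k from by omega, show n - (n-k) = k from by omega]
  have h : (2*(-t))^(n-k) = (-1:ℝ)^(n-k) * (2*t)^(n-k) := by
    rw [show 2*(-t) = (-1) * (2*t) from by ring, mul_pow]
  rw [h, pow_sub₀ (2*t) h2t hk', pow_sub₀ (-1:ℝ) (by norm_num) hk']
  field_simp
  ring_nf
  rw [show ((-1:ℝ))^(k*2) = 1 from Even.neg_one_pow ⟨k, by omega⟩,
      show ((-1:ℝ))^(n*2) = 1 from Even.neg_one_pow ⟨n, by omega⟩]

lemma choose_asc_nat (n k : ℕ) (hk : k ≤ n) :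
    n.choose k * ((n+1).ascFactorial k) * (k.factorial * (n-k).factorial)
      = (n+k).factorial := by
  have h1 := Nat.choose_mul_factorial_mul_factorial hk
  have h2 := Nat.choose_mul_factorial_mul_factorial (Nat.le_add_left k n)
  rw [Nat.add_sub_cancel] at h2
  have h3 := Nat.ascFactorial_eq_factorial_mul_choose n k
  have hnat : n.choose k * ((n+1).ascFactorial k) * (k.factorial * (n-k).factorial)
      = (n+k).factorial := by
    rw [h3]
    calc n.choose k * (k.factorial * (n+k).choose k) * (k.factorial * (n-k).factorial)
        = (n.choose k * k.factorial * (n-k).factorial) * ((n+k).choose k * k.factorial) := by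
          ring
      _ = n.factorial * ((n+k).choose k * k.factorial) := by rw [h1]
      _ = (n+k).choose k * k.factorial * n.factorial := by ring
      _ = (n+k).factorial := h2
  exact hnat

lemma choose_asc (n k : ℕ) (hk : k ≤ n) :
    ((n.choose k : ℕ) : ℝ) * (((n+1).ascFactorial k : ℕ) : ℝ)
      = ((n+k).factorial : ℝ) / ((k.factorial : ℝ) * ((n-k).factorial : ℝ)) := by
  rw [eq_div_iff (mul_ne_zero (fact_ne k) (fact_ne (n-k)))]
  exact_mod_cast choose_asc_nat n k hk

end BesselAux

open Real

theorem genBessel_zero_neg_arg (n : ℕ) (x : ℝ) (hx : 0 < x) :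
    genBessel n 0 (-(x : ℂ)) =
      ((Real.sqrt (2 / (Real.pi * x)) * Real.exp (-(1 / x)) *
          ((-1 : ℝ) ^ n * besselKhalf n (1 / x) + Real.pi * besselIhalf n (1 / x)) : ℝ) : ℂ) := by
  have hxne : x ≠ 0 := ne_of_gt hx
  have hy : (0:ℝ) < 1/x := by positivity
  set y : ℝ := 1/x with hydef
  have hyne : y ≠ 0 := ne_of_gt hy
  have hπ : (0:ℝ) < π := Real.pi_pos
  -- the K part
  have hK : besselKhalf n y
      = Real.sqrt (π/(2*y)) * Real.exp (-y) * (BesselAux.Qp n y / (2*y)^n) := by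
    rw [besselKhalf, BesselAux.sum_a_eq n y hyne, mul_assoc]
  -- the I part
  have hIr := BesselAux.hI n y hy
  -- main real identity
  have hmain : (∑ k ∈ range (n+1),
        (-1:ℝ)^k * (((n+k).factorial : ℝ) / ((k.factorial : ℝ) * ((n-k).factorial : ℝ)))
          / (2*y)^k)
      = Real.sqrt (2/(π*x)) * Real.exp (-y)
          * ((-1:ℝ)^n * besselKhalf n y + π * besselIhalf n y) := by
    rw [hK, hIr, BesselAux.sum_aneg_eq n y hyne]
    unfold BesselAux.Rf
    have hs1 : Real.sqrt (2/(π*x)) = Real.sqrt (2*y/π) := by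
      congr 1
      rw [hydef]
      field_simp
    have c1 : Real.sqrt (2*y/π) * Real.sqrt (π/(2*y)) = 1 := by
      rw [← Real.sqrt_mul (by positivity)]
      rw [show (2*y/π) * (π/(2*y)) = 1 from by field_simp]
      exact Real.sqrt_one
    have c2 : Real.sqrt (2*y/π) * Real.sqrt (y/2) = y / Real.sqrt π := by
      rw [← Real.sqrt_mul (by positivity), show (2*y/π)*(y/2) = y^2/π from by
        field_simp]
      rw [Real.sqrt_div (sq_nonneg y), Real.sqrt_sq hy.le]
    have hexp : Real.exp (-y) * Real.exp y = 1 := by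
      rw [← Real.exp_add]; simp
    have hsπ : Real.sqrt π ≠ 0 := by positivity
    have hsqq : Real.sqrt π * Real.sqrt π = π := Real.mul_self_sqrt hπ.le
    rw [hs1]
    set A := Real.sqrt (2*y/π) with hA
    set B := Real.sqrt (π/(2*y)) with hB
    set C := Real.sqrt (y/2) with hC
    set D := Real.sqrt π with hD
    have hAne : A ≠ 0 := by rw [hA]; positivity
    have hB' : B = A⁻¹ := by
      field_simp
      linear_combination c1
    have hC' : C = y / (D * A) := by
      rw [eq_div_iff (by positivity)]
      calc C * (D * A) = (A * C) * D := by ring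
        _ = (y / D) * D := by rw [c2]
        _ = y := by field_simp
    have hFne : Real.exp (-y) ≠ 0 := (Real.exp_pos _).ne'
    have hE : Real.exp y = (Real.exp (-y))⁻¹ := by rw [Real.exp_neg, inv_inv]
    rw [hB', hC', ← hsqq, hE]
    have h2yn : ((2:ℝ)*y)^n = 2^n * y^n := mul_pow 2 y n
    rw [h2yn]
    have hDne : D ≠ 0 := hsπ
    field_simp
    ring
  -- reduce the complex statement to the real one
  rw [genBessel, ← hmain]
  push_cast
  apply Finset.sum_congr rfl
  intro k hk
  have hk' : k ≤ n := Nat.lt_succ_iff.mp (Finset.mem_range.mp hk)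
  have e1 : ((n:ℂ) + 0 + 1) = ((n+1 : ℕ) : ℂ) := by push_cast; ring
  rw [e1, ← ascPochhammer_eval_cast, ascPochhammer_nat_eq_ascFactorial]
  have hreC : ((n.choose k : ℕ) : ℂ) * (((n+1).ascFactorial k : ℕ) : ℂ)
      = ((n+k).factorial : ℂ) / ((k.factorial : ℂ) * ((n-k).factorial : ℂ)) := by
    rw [eq_div_iff (mul_ne_zero
      (Nat.cast_ne_zero.mpr (Nat.factorial_ne_zero k))
      (Nat.cast_ne_zero.mpr (Nat.factorial_ne_zero (n-k))))]
    exact_mod_cast BesselAux.choose_asc_nat n k hk'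
  rw [hreC]
  have hpow : ((2:ℂ) * ((y:ℝ):ℂ))^k ≠ 0 := by
    apply pow_ne_zero
    simp only [ne_eq, mul_eq_zero, not_or]
    exact ⟨two_ne_zero, Complex.ofReal_ne_zero.mpr hyne⟩
  rw [eq_div_iff hpow]
  rw [mul_assoc, ← mul_pow]
  have hyx : ((y:ℝ):ℂ) = 1/(x:ℂ) := by rw [hydef]; push_cast; ring
  have hm1 : (-(x:ℂ)/2) * ((2:ℂ)*((y:ℝ):ℂ)) = -1 := by
    rw [hyx]
    have : (x:ℂ) ≠ 0 := Complex.ofReal_ne_zero.mpr hxne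
    field_simp
  rw [hm1]
  ring
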